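/- Let R and G be finite sets (races and genders), and let Y-hat be a random prediction variable jointly distributed with random variables Race (valued in R) and Gender (valued in G), conditioned on data X = x. Assume Race and Gender are independent, and assume the predictor is ideally counterfactually fair, i.e., P(Ŷ=y | X=x, Race=r, Gender=g) = P(Ŷ=y | X=x, Race=r', Gender=g') for all r,r' ∈ R and g,g' ∈ G. Then the predictor satisfies group fairness with respect to race: P(Ŷ=y | X=x, Race=r) = P(Ŷ=y | X=x, Race=r') for all r,r' ∈ R. -/
import Mathlib


open Finset

/-- Probability of an event under a pmf `p` on a finite sample space. -/
noncomputable def Pr {Ω : Type*} [Fintype Ω] (p : Ω → ℝ) (E : Set Ω) : ℝ :=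
  ∑ ω, Set.indicator E p ω

/-- Conditional probability `P(A | B)`. -/
noncomputable def cPr {Ω : Type*} [Fintype Ω] (p : Ω → ℝ) (A B : Set Ω) : ℝ :=
  Pr p (A ∩ B) / Pr p B

lemma Pr_partition {Ω G : Type*} [Fintype Ω] [Fintype G] (p : Ω → ℝ)
    (f : Ω → G) (A : Set Ω) :
    Pr p A = ∑ g : G, Pr p (A ∩ {ω | f ω = g}) := by
  unfold Pr
  rw [Finset.sum_comm]
  refine Finset.sum_congr rfl fun ω _ => ?_
  classical
  simp only [Set.indicator_apply, Set.mem_inter_iff, Set.mem_setOf_eq]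
  by_cases hA : ω ∈ A
  · simp only [hA, true_and, if_true]
    simp
  · simp [hA]

lemma Pr_mono {Ω : Type*} [Fintype Ω] {p : Ω → ℝ} (hp0 : ∀ ω, 0 ≤ p ω)
    {A B : Set Ω} (h : A ⊆ B) : Pr p A ≤ Pr p B := by
  refine Finset.sum_le_sum fun ω _ => ?_
  by_cases hA : ω ∈ A
  · rw [Set.indicator_of_mem hA, Set.indicator_of_mem (h hA)]
  · rw [Set.indicator_of_notMem hA]
    exact Set.indicator_nonneg (fun x _ => hp0 x) ω

/-- Counterfactual fairness implies group fairness w.r.t. race. -/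
theorem cf_implies_group_fairness_race
    {Ω R G YT : Type*} [Fintype Ω] [Fintype R] [Fintype G]
    (p : Ω → ℝ) (hp0 : ∀ ω, 0 ≤ p ω) (hp1 : ∑ ω, p ω = 1)
    (Yhat : Ω → YT) (Race : Ω → R) (Gender : Ω → G)
    (EX : Set Ω) (y : YT)
    -- all conditioning events have positive probability
    (hpos : ∀ (r : R) (g : G),
      0 < Pr p (EX ∩ {ω | Race ω = r} ∩ {ω | Gender ω = g}))
    -- Race and Gender are independent (given the data X = x)
    (hind : ∀ (r : R) (g : G),
      cPr p ({ω | Race ω = r} ∩ {ω | Gender ω = g}) EX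
        = cPr p {ω | Race ω = r} EX * cPr p {ω | Gender ω = g} EX)
    -- ideal counterfactual fairness
    (hcf : ∀ (r r' : R) (g g' : G),
      cPr p {ω | Yhat ω = y} (EX ∩ {ω | Race ω = r} ∩ {ω | Gender ω = g})
        = cPr p {ω | Yhat ω = y} (EX ∩ {ω | Race ω = r'} ∩ {ω | Gender ω = g'})) :
    ∀ r r' : R,
      cPr p {ω | Yhat ω = y} (EX ∩ {ω | Race ω = r})
        = cPr p {ω | Yhat ω = y} (EX ∩ {ω | Race ω = r'}) := by
  -- Ω is nonempty since total probability is 1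
  have hΩ : Nonempty Ω := by
    by_contra h
    rw [not_nonempty_iff] at h
    simp [Finset.univ_eq_empty] at hp1
  obtain ⟨ω₀⟩ := hΩ
  set r₀ := Race ω₀
  set g₀ := Gender ω₀
  set Y : Set Ω := {ω | Yhat ω = y}
  set c := cPr p Y (EX ∩ {ω | Race ω = r₀} ∩ {ω | Gender ω = g₀}) with hc
  suffices key : ∀ r : R, cPr p Y (EX ∩ {ω | Race ω = r}) = c by
    intro r r'; rw [key r, key r']
  intro r
  have hden : 0 < Pr p (EX ∩ {ω | Race ω = r}) :=
    lt_of_lt_of_le (hpos r g₀) (Pr_mono hp0 Set.inter_subset_left)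
  have hnum : Pr p (Y ∩ (EX ∩ {ω | Race ω = r}))
      = c * Pr p (EX ∩ {ω | Race ω = r}) := by
    rw [Pr_partition p Gender (Y ∩ (EX ∩ {ω | Race ω = r})),
        Pr_partition p Gender (EX ∩ {ω | Race ω = r}), Finset.mul_sum]
    refine Finset.sum_congr rfl fun g _ => ?_
    have h1 : Y ∩ (EX ∩ {ω | Race ω = r}) ∩ {ω | Gender ω = g}
        = Y ∩ (EX ∩ {ω | Race ω = r} ∩ {ω | Gender ω = g}) := by
      ext ω; simp [Set.mem_inter_iff]; tauto
    have h2 : cPr p Y (EX ∩ {ω | Race ω = r} ∩ {ω | Gender ω = g}) = c :=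
      hcf r r₀ g g₀
    have hg := hpos r g
    rw [h1]
    have := h2
    unfold cPr at this
    rw [← this, div_mul_cancel₀]
    exact ne_of_gt hg
  unfold cPr
  rw [hnum, mul_div_assoc, div_self (ne_of_gt hden), mul_one]
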